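/- For every fixed d ∈ (0, 1/2), the map c ↦ h(c−d) − h(c+d) is strictly increasing on c ∈ (d, 1/2); and for every fixed c ∈ (0, 1/2), the map d ↦ h(c−d) − h(c+d) is strictly decreasing on d ∈ (0, c). (Lemma 3.) -/

import Mathlib

open MeasureTheory Real Filter

/-- The standard Gaussian tail function `Q(x) = ∫_x^∞ (2π)^{-1/2} e^{-u²/2} du`. -/
noncomputable def gaussQ (x : ℝ) : ℝ :=
  ∫ u in Set.Ioi x, (Real.sqrt (2 * Real.pi))⁻¹ * Real.exp (-u ^ 2 / 2)

/-- `η(t) = -t log t` (with `η(0) = 0`, automatic since `Real.log 0 = 0`). -/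
noncomputable def eta (t : ℝ) : ℝ := -t * Real.log t

/-- The binary entropy function `h(p) = -p log p - (1-p) log (1-p)`. -/
noncomputable def binEnt (p : ℝ) : ℝ := eta p + eta (1 - p)

lemma eta_eq_negMulLog : eta = Real.negMulLog := by
  funext t; simp [eta, Real.negMulLog, neg_mul]

lemma continuous_eta : Continuous eta := by
  rw [eta_eq_negMulLog]; exact Real.continuous_negMulLog

lemma continuous_binEnt : Continuous binEnt :=
  continuous_eta.add (continuous_eta.comp (continuous_const.sub continuous_id))

lemma hasDerivAt_eta {t : ℝ} (ht : t ≠ 0) :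
    HasDerivAt eta (-Real.log t - 1) t := by
  rw [eta_eq_negMulLog]; exact Real.hasDerivAt_negMulLog ht

lemma hasDerivAt_binEnt {p : ℝ} (h0 : p ≠ 0) (h1 : p ≠ 1) :
    HasDerivAt binEnt (Real.log (1 - p) - Real.log p) p := by
  have h1' : (1 : ℝ) - p ≠ 0 := sub_ne_zero.mpr (Ne.symm h1)
  have hA := hasDerivAt_eta h0
  have hB := (hasDerivAt_eta h1').comp p ((hasDerivAt_const p (1:ℝ)).sub (hasDerivAt_id p))
  have := hA.add hB
  exact this.congr_deriv (by ring)

lemma hasDerivAt_f {c d : ℝ} (h1 : c - d ≠ 0) (h2 : c - d ≠ 1)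
    (h3 : c + d ≠ 0) (h4 : c + d ≠ 1) :
    HasDerivAt (fun c : ℝ => binEnt (c - d) - binEnt (c + d))
      ((Real.log (1 - (c - d)) - Real.log (c - d))
        - (Real.log (1 - (c + d)) - Real.log (c + d))) c := by
  have hA := (hasDerivAt_binEnt h1 h2).comp c ((hasDerivAt_id c).sub_const d)
  have hB := (hasDerivAt_binEnt h3 h4).comp c ((hasDerivAt_id c).add_const d)
  have := hA.sub hB
  exact this.congr_deriv (by ring)

lemma hasDerivAt_g {c d : ℝ} (h1 : c - d ≠ 0) (h2 : c - d ≠ 1)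
    (h3 : c + d ≠ 0) (h4 : c + d ≠ 1) :
    HasDerivAt (fun d : ℝ => binEnt (c - d) - binEnt (c + d))
      (-(Real.log (1 - (c - d)) - Real.log (c - d))
        - (Real.log (1 - (c + d)) - Real.log (c + d))) d := by
  have hA := (hasDerivAt_binEnt h1 h2).comp d ((hasDerivAt_const d c).sub (hasDerivAt_id d))
  have hB := (hasDerivAt_binEnt h3 h4).comp d ((hasDerivAt_const d c).add (hasDerivAt_id d))
  have := hA.sub hB
  exact this.congr_deriv (by ring)

/-- Lemma 3: for fixed `d ∈ (0, 1/2)`, the map `c ↦ h(c-d) - h(c+d)` is strictly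
increasing on `(d, 1/2)`; and for fixed `c ∈ (0, 1/2)`, the map
`d ↦ h(c-d) - h(c+d)` is strictly decreasing on `(0, c)`. -/
theorem binEnt_diff_monotone :
    (∀ d : ℝ, d ∈ Set.Ioo (0 : ℝ) (1 / 2) →
      StrictMonoOn (fun c : ℝ => binEnt (c - d) - binEnt (c + d))
        (Set.Ioo d (1 / 2))) ∧
    (∀ c : ℝ, c ∈ Set.Ioo (0 : ℝ) (1 / 2) →
      StrictAntiOn (fun d : ℝ => binEnt (c - d) - binEnt (c + d))
        (Set.Ioo 0 c)) := by
  constructor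
  · intro d hd
    apply strictMonoOn_of_deriv_pos (convex_Ioo d (1/2))
    · exact ((continuous_binEnt.comp (continuous_id.sub continuous_const)).sub
        (continuous_binEnt.comp (continuous_id.add continuous_const))).continuousOn
    · intro c hc
      rw [interior_Ioo] at hc
      obtain ⟨hc1, hc2⟩ := hc
      have hd0 := hd.1
      have hd2 := hd.2
      have hcd0 : 0 < c - d := by linarith
      have hcd1 : c - d < 1 := by linarith
      have hcd0' : 0 < c + d := by linarith
      have hcd1' : c + d < 1 := by linarith
      rw [(hasDerivAt_f hcd0.ne' hcd1.ne hcd0'.ne' hcd1'.ne).deriv]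
      have l1 : Real.log (c - d) < Real.log (c + d) :=
        Real.log_lt_log hcd0 (by linarith)
      have l2 : Real.log (1 - (c + d)) < Real.log (1 - (c - d)) :=
        Real.log_lt_log (by linarith) (by linarith)
      linarith
  · intro c hc
    apply strictAntiOn_of_deriv_neg (convex_Ioo 0 c)
    · exact ((continuous_binEnt.comp (continuous_const.sub continuous_id)).sub
        (continuous_binEnt.comp (continuous_const.add continuous_id))).continuousOn
    · intro d hd
      rw [interior_Ioo] at hd
      obtain ⟨hd1, hd2⟩ := hd
      have hc0 := hc.1
      have hc2 := hc.2
      have hcd0 : 0 < c - d := by linarith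
      have hcd1 : c - d < 1 := by linarith
      have hcd0' : 0 < c + d := by linarith
      have hcd1' : c + d < 1 := by linarith
      rw [(hasDerivAt_g hcd0.ne' hcd1.ne hcd0'.ne' hcd1'.ne).deriv]
      have l1 : Real.log (c - d) < Real.log (1 - (c + d)) :=
        Real.log_lt_log hcd0 (by linarith)
      have l2 : Real.log (c + d) < Real.log (1 - (c - d)) :=
        Real.log_lt_log hcd0' (by linarith)
      linarith
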